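/- Let A be an m×m matrix with nonnegative integer entries (m ≥ 1). Then there exist an integer ℓ ≥ 1, a permutation σ of {1,…,m}, and indices 0 = m₀ < m₁ < … < m_r = m such that the matrix B defined by B_{ij} = (A^ℓ)_{σ(i)σ(j)} is block upper triangular with respect to the partition of {1,…,m} into the consecutive intervals (m_{t−1}, m_t] (i.e., B_{ij} = 0 whenever the block containing i comes strictly after the block containing j), and each diagonal block (B_{ij})_{m_{t−1} < i,j ≤ m_t} is either the zero matrix or primitive. -/

import Mathlib

/-- A square matrix of nonnegative integers (indexed by an arbitrary fintype)
is primitive if some power `n ≥ 1` of it has all entries positive. -/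
def Matrix.IsPrimitiveNat {ι : Type*} [Fintype ι] [DecidableEq ι]
    (A : Matrix ι ι ℕ) : Prop :=
  ∃ n : ℕ, 1 ≤ n ∧ ∀ i j, 0 < (A ^ n) i j

/-- The diagonal block of `B` corresponding to the interval `[lo, hi)` of indices,
viewed as a matrix indexed by the subtype of indices lying in that interval. -/
def diagBlock {m : ℕ} (B : Matrix (Fin m) (Fin m) ℕ) (lo hi : ℕ) :
    Matrix {i : Fin m // lo ≤ i.val ∧ i.val < hi} {i : Fin m // lo ≤ i.val ∧ i.val < hi} ℕ :=
  fun p q => B p.val q.val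


open Finset


lemma mul_apply_pos {m : ℕ} (B C : Matrix (Fin m) (Fin m) ℕ) (i j : Fin m) :
    0 < (B * C) i j ↔ ∃ k, 0 < B i k ∧ 0 < C k j := by
  rw [Matrix.mul_apply]
  constructor
  · intro h
    obtain ⟨k, -, hk⟩ := Finset.exists_ne_zero_of_sum_ne_zero h.ne'
    rw [Nat.mul_ne_zero_iff] at hk
    exact ⟨k, Nat.pos_of_ne_zero hk.1, Nat.pos_of_ne_zero hk.2⟩
  · rintro ⟨k, hk1, hk2⟩
    exact Finset.sum_pos' (fun _ _ => Nat.zero_le _) ⟨k, mem_univ k, Nat.mul_pos hk1 hk2⟩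

-- idempotent power
lemma exists_idem_supp {m : ℕ} (A : Matrix (Fin m) (Fin m) ℕ) :
    ∃ ℓ : ℕ, 1 ≤ ℓ ∧ ∀ i j, (0 < (A ^ ℓ * A ^ ℓ) i j ↔ 0 < (A ^ ℓ) i j) := by
  obtain ⟨a, b, hne, hab⟩ := Finite.exists_ne_map_eq_of_infinite
    (fun n : ℕ => (fun i j => decide (0 < (A ^ n) i j) : Matrix (Fin m) (Fin m) Bool))
  wlog hlt : a < b generalizing a b
  · exact this b a hne.symm hab.symm (by omega)
  have hsupp : ∀ i j, (0 < (A ^ a) i j ↔ 0 < (A ^ b) i j) := by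
    intro i j
    have := congrFun (congrFun hab i) j
    simpa [decide_eq_decide] using this
  set d := b - a with hd
  have hd1 : 1 ≤ d := by omega
  -- step: for n ≥ a, supports of A^(n+d) and A^n agree
  have hstep : ∀ n, a ≤ n → ∀ i j, (0 < (A ^ (n + d)) i j ↔ 0 < (A ^ n) i j) := by
    intro n hn i j
    have h1 : n + d = b + (n - a) := by omega
    have h2 : n = a + (n - a) := by omega
    rw [h1, pow_add, mul_apply_pos]
    conv_rhs => rw [h2, pow_add, mul_apply_pos]
    exact exists_congr fun k => and_congr_left' (hsupp i k).symm
  set ℓ := (a + 1) * d with hℓ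
  have hℓa : a + 1 ≤ ℓ := by calc a+1 = (a+1)*1 := by ring
    _ ≤ (a+1)*d := Nat.mul_le_mul_left _ hd1
  have hiter : ∀ t i j, (0 < (A ^ (ℓ + t * d)) i j ↔ 0 < (A ^ ℓ) i j) := by
    intro t
    induction t with
    | zero => simp
    | succ t ih =>
      intro i j
      have : ℓ + (t + 1) * d = (ℓ + t * d) + d := by ring
      rw [this, hstep _ (by omega)]
      exact ih i j
  refine ⟨ℓ, by omega, fun i j => ?_⟩
  have h2ℓ : ℓ + (a + 1) * d = ℓ + ℓ := by rw [hℓ]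
  rw [← pow_add, ← h2ℓ]
  exact hiter (a + 1) i j


section
variable {m : ℕ} (B : Matrix (Fin m) (Fin m) ℕ)

def rr (i j : Fin m) : Prop := 0 < B i j ∨ i = j

def ee (i j : Fin m) : Prop := rr B i j ∧ rr B j i

variable (hBB : ∀ i j, 0 < (B * B) i j ↔ 0 < B i j)
include hBB

lemma tpos {i j k : Fin m} (h1 : 0 < B i j) (h2 : 0 < B j k) : 0 < B i k :=
  (hBB i k).1 ((mul_apply_pos B B i k).2 ⟨j, h1, h2⟩)

omit hBB in
lemma rr_refl (i : Fin m) : rr B i i := Or.inr rfl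

lemma rr_trans {i j k : Fin m} (h1 : rr B i j) (h2 : rr B j k) : rr B i k := by
  rcases h1 with h1 | rfl
  · rcases h2 with h2 | rfl
    · exact Or.inl (tpos B hBB h1 h2)
    · exact Or.inl h1
  · exact h2

omit hBB in
lemma ee_refl (i : Fin m) : ee B i i := ⟨rr_refl B i, rr_refl B i⟩

omit hBB in
lemma ee_symm {i j : Fin m} (h : ee B i j) : ee B j i := ⟨h.2, h.1⟩

lemma ee_trans {i j k : Fin m} (h1 : ee B i j) (h2 : ee B j k) : ee B i k :=
  ⟨rr_trans B hBB h1.1 h2.1, rr_trans B hBB h2.2 h1.2⟩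

open Classical in
noncomputable def rnk (i : Fin m) : ℕ := (univ.filter (fun k => rr B k i)).card

open Classical in
noncomputable def mclF (i : Fin m) : Fin m :=
  (univ.filter (fun k => ee B k i)).min'
    ⟨i, Finset.mem_filter.2 ⟨mem_univ i, ee_refl B i⟩⟩

noncomputable def keyf (i : Fin m) : ℕ := (mclF B i).val + rnk B i * m

open Classical

omit hBB in
lemma mclF_ee (i : Fin m) : ee B (mclF B i) i := by
  have := Finset.min'_mem (univ.filter (fun k => ee B k i))
    ⟨i, Finset.mem_filter.2 ⟨mem_univ i, ee_refl B i⟩⟩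
  simpa [mclF] using (Finset.mem_filter.1 this).2

lemma rnk_congr {i j : Fin m} (h : ee B i j) : rnk B i = rnk B j := by
  unfold rnk
  congr 1
  ext k
  simp only [mem_filter, mem_univ, true_and]
  exact ⟨fun hk => rr_trans B hBB hk h.1, fun hk => rr_trans B hBB hk h.2⟩

lemma mclF_congr {i j : Fin m} (h : ee B i j) : mclF B i = mclF B j := by
  unfold mclF
  congr 1
  ext k
  simp only [mem_filter, mem_univ, true_and]
  exact ⟨fun hk => ee_trans B hBB hk h, fun hk => ee_trans B hBB hk (ee_symm B h)⟩

lemma rnk_lt {i j : Fin m} (hpos : 0 < B i j) (hne : ¬ ee B i j) : rnk B i < rnk B j := by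
  apply Finset.card_lt_card
  constructor
  · intro k hk
    simp only [mem_filter, mem_univ, true_and] at hk ⊢
    exact rr_trans B hBB hk (Or.inl hpos)
  · intro hsub
    have hj : j ∈ univ.filter (fun k => rr B k j) :=
      Finset.mem_filter.2 ⟨mem_univ j, rr_refl B j⟩
    have := hsub hj
    simp only [mem_filter, mem_univ, true_and] at this
    exact hne ⟨Or.inl hpos, this⟩

lemma keyf_congr {i j : Fin m} (h : ee B i j) : keyf B i = keyf B j := by
  unfold keyf
  rw [rnk_congr B hBB h, mclF_congr B hBB h]

lemma keyf_le {i j : Fin m} (hpos : 0 < B i j) : keyf B i ≤ keyf B j := by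
  by_cases h : ee B i j
  · exact (keyf_congr B hBB h).le
  · have h1 : rnk B i < rnk B j := rnk_lt B hBB hpos h
    have h2 : (mclF B i).val < m := (mclF B i).is_lt
    have h3 : (mclF B i).val + rnk B i * m < (rnk B i + 1) * m := by
      rw [add_mul, one_mul]; omega
    unfold keyf
    have h4 : (rnk B i + 1) * m ≤ rnk B j * m := Nat.mul_le_mul_right m h1
    omega
  
lemma ee_of_keyf_eq {i j : Fin m} (h : keyf B i = keyf B j) : ee B i j := by
  have hm : 0 < m := i.pos
  have h1 : (mclF B i).val < m := (mclF B i).is_lt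
  have h2 : (mclF B j).val < m := (mclF B j).is_lt
  have hmod : (mclF B i).val = (mclF B j).val := by
    have e1 := congrArg (· % m) h
    simpa [keyf, Nat.add_mul_mod_self_right, Nat.mod_eq_of_lt h1, Nat.mod_eq_of_lt h2] using e1
  have hmcl : mclF B i = mclF B j := Fin.ext hmod
  have h5 : ee B (mclF B j) j := mclF_ee B j
  rw [← hmcl] at h5
  exact ee_trans B hBB (ee_symm B (mclF_ee B i)) h5

-- down-closed sets of Fin m are initial segments
omit hBB in
lemma mem_downset (s : Finset (Fin m)) (hs : ∀ {i j : Fin m}, i ≤ j → j ∈ s → i ∈ s)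
    (i : Fin m) : i ∈ s ↔ i.val < s.card := by
  constructor
  · intro hi
    have hsub : Finset.Iic i ⊆ s := fun j hj => hs (Finset.mem_Iic.1 hj) hi
    have := Finset.card_le_card hsub
    rw [Fin.card_Iic] at this
    omega
  · intro hi
    by_contra hns
    have hsub : s ⊆ Finset.Iio i := by
      intro j hj
      rw [Finset.mem_Iio]
      by_contra hji
      exact hns (hs (le_of_not_gt hji) hj)
    have := Finset.card_le_card hsub
    rw [Fin.card_Iio] at this
    omega

end

theorem stmt6 {m : ℕ} (hm : 1 ≤ m) (A : Matrix (Fin m) (Fin m) ℕ) :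
    ∃ ℓ : ℕ, 1 ≤ ℓ ∧ ∃ σ : Equiv.Perm (Fin m), ∃ r : ℕ, ∃ c : Fin (r + 1) → ℕ,
      StrictMono c ∧ c 0 = 0 ∧ c (Fin.last r) = m ∧
      -- block upper triangular: entries whose row-block comes strictly after the
      -- column-block vanish
      (∀ (s t : Fin r) (i j : Fin m),
        c s.castSucc ≤ i.val → i.val < c s.succ →
        c t.castSucc ≤ j.val → j.val < c t.succ →
        t < s → (A ^ ℓ) (σ i) (σ j) = 0) ∧
      -- each diagonal block is either zero or primitive
      (∀ t : Fin r,
        (∀ p q, diagBlock (fun i j => (A ^ ℓ) (σ i) (σ j)) (c t.castSucc) (c t.succ) p q = 0) ∨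
        (diagBlock (fun i j => (A ^ ℓ) (σ i) (σ j)) (c t.castSucc) (c t.succ)).IsPrimitiveNat) := by
  classical
  obtain ⟨ℓ, hℓ1, hBB⟩ := exists_idem_supp A
  refine ⟨ℓ, hℓ1, ?_⟩
  set B := A ^ ℓ with hBdef
  set σ : Equiv.Perm (Fin m) := Tuple.sort (keyf B) with hσ
  set g : Fin m → ℕ := fun i => keyf B (σ i) with hg
  have hgmono : Monotone g := Tuple.monotone_sort (keyf B)
  set V : Finset ℕ := univ.image g with hV
  set b : Fin m → ℕ := fun i => (V.filter (fun v => v < g i)).card with hb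
  set r : ℕ := V.card with hr
  have hgV : ∀ i, g i ∈ V := fun i => Finset.mem_image_of_mem g (mem_univ i)
  have hbmono : ∀ {i j : Fin m}, g i ≤ g j → b i ≤ b j := by
    intro i j hij
    apply Finset.card_le_card
    intro v hv
    rw [Finset.mem_filter] at hv ⊢
    exact ⟨hv.1, lt_of_lt_of_le hv.2 hij⟩
  have hhlt : ∀ v ∈ V, ∀ w, v < w →
      (V.filter (fun x => x < v)).card < (V.filter (fun x => x < w)).card := by
    intro v hv w hvw
    apply Finset.card_lt_card
    rw [Finset.ssubset_iff_of_subset]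
    · exact ⟨v, Finset.mem_filter.2 ⟨hv, hvw⟩, by simp⟩
    · intro x hx
      rw [Finset.mem_filter] at hx ⊢
      exact ⟨hx.1, lt_trans hx.2 hvw⟩
  have hblt : ∀ {i j : Fin m}, g i < g j → b i < b j := fun {i j} h => hhlt _ (hgV i) _ h
  have hbeqg : ∀ {i j : Fin m}, b i = b j → g i = g j := by
    intro i j h
    rcases lt_trichotomy (g i) (g j) with hlt | heq | hgt
    · exact absurd h (Nat.ne_of_lt (hblt hlt))
    · exact heq
    · exact absurd h.symm (Nat.ne_of_lt (hblt hgt))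
  have hblt_r : ∀ i, b i < r := by
    intro i
    apply Finset.card_lt_card
    rw [Finset.ssubset_iff_of_subset (Finset.filter_subset _ _)]
    exact ⟨g i, hgV i, by simp⟩
  have hbsurj : ∀ t, t < r → ∃ i, b i = t := by
    intro t ht
    have himb : univ.image b = Finset.range r := by
      apply Finset.eq_of_subset_of_card_le
      · intro x hx
        rw [Finset.mem_image] at hx
        obtain ⟨i, -, rfl⟩ := hx
        exact Finset.mem_range.2 (hblt_r i)
      · rw [Finset.card_range]
        have h1 : univ.image b = V.image (fun v => (V.filter (fun x => x < v)).card) := by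
          rw [hV, Finset.image_image]
          rfl
        rw [h1]
        rw [Finset.card_image_of_injOn]
        intro v hv w hw hvw
        by_contra hne
        rcases lt_or_gt_of_ne hne with h | h
        · exact absurd hvw (Nat.ne_of_lt (hhlt v hv w h))
        · exact absurd hvw.symm (Nat.ne_of_lt (hhlt w hw v h))
    have : t ∈ univ.image b := by rw [himb]; exact Finset.mem_range.2 ht
    rw [Finset.mem_image] at this
    obtain ⟨i, -, hi⟩ := this
    exact ⟨i, hi⟩
  set c : Fin (r + 1) → ℕ := fun t => (univ.filter (fun i => b i < t.val)).card with hc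
  have hmem : ∀ (t : ℕ) (i : Fin m), i.val < (univ.filter (fun i => b i < t)).card ↔ b i < t := by
    intro t i
    rw [← mem_downset (univ.filter (fun i => b i < t))]
    · simp
    · intro i j hij hj
      simp only [Finset.mem_filter, Finset.mem_univ, true_and] at hj ⊢
      exact lt_of_le_of_lt (hbmono (hgmono hij)) hj
  have hcmem : ∀ (t : Fin (r + 1)) (i : Fin m), i.val < c t ↔ b i < t.val := fun t i => hmem t.val i
  have hblockmem : ∀ (t : Fin r) (i : Fin m),
      (c t.castSucc ≤ i.val ∧ i.val < c t.succ) ↔ b i = t.val := by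
    intro t i
    have h1 := hcmem t.castSucc i
    have h2 := hcmem t.succ i
    rw [Fin.coe_castSucc] at h1
    rw [Fin.val_succ] at h2
    omega
  refine ⟨σ, r, c, ?_, ?_, ?_, ?_, ?_⟩
  · -- StrictMono
    intro t t' htt'
    have htval : t.val < t'.val := htt'
    apply Finset.card_lt_card
    rw [Finset.ssubset_iff_of_subset]
    · obtain ⟨i, hi⟩ := hbsurj t.val (by omega)
      refine ⟨i, ?_, ?_⟩
      · simp only [Finset.mem_filter, Finset.mem_univ, true_and]; omega
      · simp only [Finset.mem_filter, Finset.mem_univ, true_and]; omega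
    · intro i hi
      simp only [Finset.mem_filter, Finset.mem_univ, true_and] at hi ⊢
      omega
  · -- c 0 = 0
    simp [hc]
  · -- c last = m
    have : (univ.filter (fun i : Fin m => b i < (Fin.last r).val)) = univ := by
      apply Finset.filter_true_of_mem
      intro i _
      simpa using hblt_r i
    rw [hc]
    simp only [this, Finset.card_univ, Fintype.card_fin]
  · -- triangularity
    intro s t i j h1 h2 h3 h4 hts
    have hbi : b i = s.val := (hblockmem s i).1 ⟨h1, h2⟩
    have hbj : b j = t.val := (hblockmem t j).1 ⟨h3, h4⟩
    by_contra hne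
    have hpos : 0 < B (σ i) (σ j) := Nat.pos_of_ne_zero hne
    have hkey : g i ≤ g j := keyf_le B hBB hpos
    have := hbmono hkey
    have htval : t.val < s.val := hts
    omega
  · -- diagonal blocks
    intro t
    by_cases hz : ∀ p q, diagBlock (fun i j => B (σ i) (σ j)) (c t.castSucc) (c t.succ) p q = 0
    · exact Or.inl hz
    · right
      push_neg at hz
      obtain ⟨p₀, q₀, h₀⟩ := hz
      have hpos₀ : 0 < B (σ p₀.val) (σ q₀.val) := Nat.pos_of_ne_zero h₀
      have hsameblock : ∀ p q : {i : Fin m // c t.castSucc ≤ i.val ∧ i.val < c t.succ},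
          ee B (σ p.val) (σ q.val) := by
        intro p q
        have hp : b p.val = t.val := (hblockmem t p.val).1 p.2
        have hq : b q.val = t.val := (hblockmem t q.val).1 q.2
        exact ee_of_keyf_eq B hBB (hbeqg (hp.trans hq.symm))
      have hdiag : 0 < B (σ p₀.val) (σ p₀.val) := by
        rcases (hsameblock p₀ q₀).2 with h | h
        · exact tpos B hBB hpos₀ h
        · rw [h] at hpos₀; exact hpos₀
      refine ⟨1, le_refl 1, ?_⟩
      intro p q
      rw [pow_one]
      show 0 < B (σ p.val) (σ q.val)
      have h1 : 0 < B (σ p.val) (σ p₀.val) := by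
        rcases (hsameblock p p₀).1 with h | h
        · exact h
        · rw [h]; exact hdiag
      rcases (hsameblock p₀ q).1 with h | h
      · exact tpos B hBB h1 h
      · rw [← h]; exact h1
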